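/- arXiv:1604.02011 — 4 statements merged into one kernel-verified Lean document; each statement's English description precedes it below -/
import Mathlib

section
/- The matrix element integral J_{n,m}(α) = ∫_ℝ φ_n(x) φ_m(x) e^{iαx} dx, where φ_n(x) = (√(2π) n!)^{-1/2} e^{-x²/4} He_n(x) are the probabilist-Hermite oscillator functions, satisfies for m ≥ n and real α: J_{n,m}(α) = e^{-α²/2} (n!m!)^{-1/2} Σ_{k=0}^{n} C(n,k) C(m,k) k! (iα)^{n+m-2k}. -/
open MeasureTheory Finset
open scoped Real

/-- The probabilist-Hermite oscillator wave function
`φ_n(x) = (√(2π) n!)^{-1/2} e^{-x²/4} He_n(x)`. -/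
noncomputable def oscFun (n : ℕ) (x : ℝ) : ℝ :=
  (Real.sqrt (Real.sqrt (2 * π) * n.factorial))⁻¹ * Real.exp (-x ^ 2 / 4) *
    (Polynomial.aeval x (Polynomial.hermite n))

namespace JAux

open Polynomial Filter Asymptotics

/-- The basic integral `∫ P(x) e^{-x²/2} e^{iαx} dx`. -/
noncomputable def gInt (α : ℝ) (P : Polynomial ℤ) : ℂ :=
  ∫ x : ℝ, ((aeval x P * Real.exp (-(1/2) * x ^ 2) : ℝ) : ℂ) * Complex.exp (Complex.I * α * x)

lemma int_real (P : Polynomial ℤ) :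
    Integrable fun x : ℝ => (aeval x P : ℝ) * Real.exp (-(1/2) * x ^ 2) := by
  induction P using Polynomial.induction_on' with
  | add p q hp hq => simpa [add_mul, Pi.add_def] using hp.add hq
  | monomial i c =>
      have h0 : (-1 : ℝ) < (i : ℝ) := by
        have : (0:ℝ) ≤ i := Nat.cast_nonneg i
        linarith
      have h := (integrable_rpow_mul_exp_neg_mul_sq (b := 1/2) (by norm_num) h0).const_mul
        ((c : ℝ))
      simp_rw [Real.rpow_natCast] at h
      simpa [aeval_monomial, mul_assoc] using h

lemma tend_top (P : Polynomial ℤ) :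
    Tendsto (fun x : ℝ => (aeval x P : ℝ) * Real.exp (-(1/2) * x ^ 2)) atTop (nhds 0) := by
  induction P using Polynomial.induction_on' with
  | add p q hp hq => simpa [add_mul] using hp.add hq
  | monomial i c =>
      have hg : Tendsto (fun x : ℝ => Real.exp (-(1/2) * x)) atTop (nhds 0) := by
        apply Real.tendsto_exp_atBot.comp
        exact Tendsto.const_mul_atTop_of_neg (by norm_num) tendsto_id
      have h := (rpow_mul_exp_neg_mul_sq_isLittleO_exp_neg (b := 1/2) (by norm_num)
        (i : ℝ)).trans_tendsto hg
      simp_rw [Real.rpow_natCast] at h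
      have h2 := h.const_mul ((c : ℝ))
      simp only [mul_zero] at h2
      refine h2.congr' ?_
      filter_upwards with x
      simp [aeval_monomial, mul_assoc]

lemma tend_bot (P : Polynomial ℤ) :
    Tendsto (fun x : ℝ => (aeval x P : ℝ) * Real.exp (-(1/2) * x ^ 2)) atBot (nhds 0) := by
  have h := (tend_top (P.comp (-X))).comp tendsto_neg_atBot_atTop
  refine h.congr' ?_
  filter_upwards with x
  simp [Function.comp, aeval_comp]

lemma norm_cexp_I (α x : ℝ) : ‖Complex.exp (Complex.I * α * x)‖ = 1 := by
  rw [Complex.norm_exp]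
  simp [Complex.mul_re]

lemma int_cplx (α : ℝ) (P : Polynomial ℤ) :
    Integrable fun x : ℝ =>
      ((aeval x P * Real.exp (-(1/2) * x ^ 2) : ℝ) : ℂ) * Complex.exp (Complex.I * α * x) := by
  have h := ((int_real P).ofReal (𝕜 := ℂ)).bdd_mul
    (f := fun x : ℝ => Complex.exp (Complex.I * α * x))
    ((Complex.continuous_exp.comp (by fun_prop)).aestronglyMeasurable)
    (ae_of_all _ fun x => le_of_eq (norm_cexp_I α x))
  exact h.congr (Eventually.of_forall fun x => mul_comm _ _)

lemma integral_deriv_zero (F F' : ℝ → ℂ) (h : ∀ x, HasDerivAt F (F' x) x)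
    (hi : Integrable F') (ht : Tendsto F atTop (nhds 0)) (hb : Tendsto F atBot (nhds 0)) :
    ∫ x, F' x = 0 := by
  rw [← intervalIntegral.integral_Iic_add_Ioi (hi.integrableOn) (hi.integrableOn) (b := 0)]
  rw [integral_Iic_of_hasDerivAt_of_tendsto' (fun x _ => h x) hi.integrableOn hb,
    integral_Ioi_of_hasDerivAt_of_tendsto' (fun x _ => h x) hi.integrableOn ht]
  ring

lemma norm_F (α : ℝ) (P : Polynomial ℤ) (x : ℝ) :
    ‖((aeval x P * Real.exp (-(1/2) * x ^ 2) : ℝ) : ℂ) * Complex.exp (Complex.I * α * x)‖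
      = |aeval x P * Real.exp (-(1/2) * x ^ 2)| := by
  rw [norm_mul, Complex.norm_real, norm_cexp_I, mul_one, Real.norm_eq_abs]

/-- Key integration-by-parts lemma. -/
lemma gInt_key (α : ℝ) (P : Polynomial ℤ) :
    gInt α (X * P - derivative P) = Complex.I * α * gInt α P := by
  set E : ℝ → ℂ := fun x => Complex.exp (Complex.I * α * x) with hE
  set F : ℝ → ℂ := fun x => ((aeval x P * Real.exp (-(1/2) * x ^ 2) : ℝ) : ℂ) * E x with hF
  set D : ℝ → ℂ := fun x =>
    ((aeval x (derivative P - X * P) * Real.exp (-(1/2) * x ^ 2) : ℝ) : ℂ) * E x with hD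
  have hderiv : ∀ x : ℝ, HasDerivAt F (D x + Complex.I * α * F x) x := by
    intro x
    have h1 : HasDerivAt (fun x : ℝ => (aeval x P : ℝ)) (aeval x (derivative P)) x :=
      P.hasDerivAt_aeval x
    have h2 : HasDerivAt (fun x : ℝ => Real.exp (-(1/2) * x ^ 2))
        (Real.exp (-(1/2) * x ^ 2) * (-(1/2) * (2 * x ^ 1))) x :=
      ((hasDerivAt_pow 2 x).const_mul (-(1/2) : ℝ)).exp
    have hg : HasDerivAt (fun x : ℝ => (aeval x P : ℝ) * Real.exp (-(1/2) * x ^ 2))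
        ((aeval x (derivative P - X * P) : ℝ) * Real.exp (-(1/2) * x ^ 2)) x := by
      refine (h1.fun_mul h2).congr_deriv ?_
      simp only [map_sub, map_mul, aeval_X]
      ring
    have h3 : HasDerivAt (fun x : ℝ => (Complex.I * ↑α * (x : ℂ))) (Complex.I * ↑α) x := by
      simpa using (Complex.ofRealCLM.hasDerivAt (x := x)).const_mul (Complex.I * (α : ℂ))
    have hEx : HasDerivAt E (Complex.I * α * E x) x := by
      convert h3.cexp using 1
      rw [hE]
      ring
    have := (hg.ofReal_comp).fun_mul hEx
    refine this.congr_deriv ?_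
    simp only [hD, hF]
    push_cast
    ring
  have h0 : ∫ x, (D x + Complex.I * α * F x) = 0 :=
    integral_deriv_zero F _ hderiv
      ((int_cplx α _).add ((int_cplx α P).const_mul _))
      (by
        rw [tendsto_zero_iff_norm_tendsto_zero]
        have h := (tend_top P).abs
        rw [abs_zero] at h
        exact h.congr fun x => (norm_F α P x).symm)
      (by
        rw [tendsto_zero_iff_norm_tendsto_zero]
        have h := (tend_bot P).abs
        rw [abs_zero] at h
        exact h.congr fun x => (norm_F α P x).symm)
  rw [integral_add (int_cplx α _) ((int_cplx α P).const_mul _),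
    integral_const_mul] at h0
  have hneg : (∫ x, D x) = - gInt α (X * P - derivative P) := by
    rw [gInt, ← integral_neg]
    refine integral_congr_ae (Eventually.of_forall fun x => ?_)
    simp only [hD, hE, show derivative P - X * P = -(X * P - derivative P) from by ring,
      map_neg, Complex.ofReal_neg, neg_mul, mul_neg]
  rw [hneg] at h0
  simp only [gInt] at h0 ⊢
  linear_combination -h0

lemma deriv_hermite (n : ℕ) : derivative (hermite n) = n • hermite (n - 1) := by
  induction n with
  | zero => simp [hermite_zero]
  | succ n ih =>
    rw [hermite_succ, derivative_sub, derivative_mul, derivative_X, one_mul, ih]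
    cases n with
    | zero => simp [hermite_zero, hermite_one]
    | succ k =>
      rw [Nat.succ_sub_one, Nat.succ_sub_one, derivative_smul, mul_smul_comm, add_sub_assoc,
        ← smul_sub, ← hermite_succ, succ_nsmul]
      simp only [nsmul_eq_mul]
      push_cast
      ring

lemma gInt_sub (α : ℝ) (P Q : Polynomial ℤ) : gInt α (P - Q) = gInt α P - gInt α Q := by
  simp only [gInt]
  rw [← integral_sub (int_cplx α P) (int_cplx α Q)]
  refine integral_congr_ae (Eventually.of_forall fun x => ?_)
  simp only [map_sub]
  push_cast
  ring

lemma gInt_nsmul (α : ℝ) (c : ℕ) (P : Polynomial ℤ) : gInt α (c • P) = c * gInt α P := by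
  simp only [gInt]
  rw [← integral_const_mul]
  refine integral_congr_ae (Eventually.of_forall fun x => ?_)
  simp only [map_nsmul, nsmul_eq_mul, map_mul, map_natCast]
  push_cast
  ring

lemma gInt_rec (α : ℝ) (n m : ℕ) :
    gInt α (hermite (n+1) * hermite m)
      = Complex.I * α * gInt α (hermite n * hermite m)
        + (m : ℂ) * gInt α (hermite n * hermite (m-1)) := by
  have key := gInt_key α (hermite n * hermite m)
  have hXP : X * (hermite n * hermite m) - derivative (hermite n * hermite m)
      = hermite (n+1) * hermite m - m • (hermite n * hermite (m-1)) := by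
    simp only [derivative_mul, deriv_hermite, hermite_succ, nsmul_eq_mul]
    ring
  rw [hXP, gInt_sub, gInt_nsmul] at key
  linear_combination key

lemma gInt_one (α : ℝ) :
    gInt α 1 = ((Real.sqrt (2 * π) * Real.exp (-α ^ 2 / 2) : ℝ) : ℂ) := by
  have h := fourierIntegral_gaussian (b := (1/2 : ℂ)) (by norm_num) (α : ℂ)
  have h1 : gInt α 1 = ∫ x : ℝ, Complex.exp (Complex.I * α * x)
      * Complex.exp (-(1/2 : ℂ) * (x : ℂ) ^ 2) := by
    simp only [gInt]
    refine integral_congr_ae (Eventually.of_forall fun x => ?_)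
    simp only [map_one, one_mul, Complex.ofReal_exp]
    rw [mul_comm]
    congr 2
    push_cast
    ring
  rw [h1, h]
  have h2 : ((π : ℂ) / (1/2 : ℂ)) ^ (1/2 : ℂ) = ((Real.sqrt (2 * π) : ℝ) : ℂ) := by
    have : ((π : ℂ) / (1/2 : ℂ)) = ((2 * π : ℝ) : ℂ) := by push_cast; ring
    rw [this, show (1/2 : ℂ) = ((1/2 : ℝ) : ℂ) from by norm_num,
      ← Complex.ofReal_cpow (by positivity), Real.sqrt_eq_rpow]
  have h3 : Complex.exp (-(α : ℂ) ^ 2 / (4 * (1/2 : ℂ)))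
      = ((Real.exp (-α ^ 2 / 2) : ℝ) : ℂ) := by
    rw [Complex.ofReal_exp]
    congr 1
    push_cast
    ring
  rw [h2, h3, ← Complex.ofReal_mul]

lemma sum_identity (z : ℂ) (n m : ℕ) :
    ∑ k ∈ Finset.range (n + 2),
        (((n+1).choose k : ℂ) * (m.choose k : ℂ) * (k.factorial : ℂ)) * z ^ (n + 1 + m - 2 * k)
      = z * ∑ k ∈ Finset.range (n + 1),
          ((n.choose k : ℂ) * (m.choose k : ℂ) * (k.factorial : ℂ)) * z ^ (n + m - 2 * k)
        + (m : ℂ) * ∑ k ∈ Finset.range (n + 1),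
          ((n.choose k : ℂ) * ((m-1).choose k : ℂ) * (k.factorial : ℂ)) * z ^ (n + (m-1) - 2 * k) := by
  rw [Finset.mul_sum, Finset.mul_sum]
  have split : ∀ k ∈ Finset.range (n + 2),
      (((n+1).choose k : ℂ) * (m.choose k : ℂ) * (k.factorial : ℂ)) * z ^ (n + 1 + m - 2 * k)
        = ((n.choose k : ℂ) * (m.choose k : ℂ) * (k.factorial : ℂ)) * z ^ (n + 1 + m - 2 * k)
          + ((((n+1).choose k : ℂ) - (n.choose k : ℂ)) * (m.choose k : ℂ) * (k.factorial : ℂ))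
            * z ^ (n + 1 + m - 2 * k) := fun k _ => by ring
  rw [Finset.sum_congr rfl split, Finset.sum_add_distrib]
  congr 1
  · rw [Finset.sum_range_succ, Nat.choose_succ_self]
    push_cast
    rw [zero_mul, zero_mul, zero_mul, add_zero]
    refine Finset.sum_congr rfl fun k hk => ?_
    rcases le_or_gt (2 * k) (n + m) with h | h
    · rw [show n + 1 + m - 2 * k = (n + m - 2 * k) + 1 from by omega, pow_succ]
      ring
    · have hk' : k < n + 1 := Finset.mem_range.mp hk
      have hm : m < k := by omega
      rw [Nat.choose_eq_zero_of_lt hm]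
      push_cast
      ring
  · rw [Finset.sum_range_succ']
    simp only [Nat.choose_zero_right, Nat.cast_one, sub_self, zero_mul, mul_zero, add_zero]
    refine Finset.sum_congr rfl fun k hk => ?_
    have hc : (((n+1).choose (k+1) : ℂ)) - (n.choose (k+1) : ℂ) = (n.choose k : ℂ) := by
      rw [Nat.choose_succ_succ]
      push_cast
      ring
    rw [hc]
    cases m with
    | zero =>
        rw [Nat.choose_eq_zero_of_lt (Nat.succ_pos k)]
        push_cast
        ring
    | succ m' =>
        have hmc : ((m' + 1 : ℕ) : ℂ) * (m'.choose k : ℂ) * (k.factorial : ℂ)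
            = ((m'+1).choose (k+1) : ℂ) * ((k+1).factorial : ℂ) := by
          have h1 := Nat.add_one_mul_choose_eq m' k
          have h2 : (((m' + 1) * m'.choose k : ℕ) : ℂ) = (((m'+1).choose (k+1) * (k+1) : ℕ) : ℂ) := by
            exact_mod_cast congrArg (Nat.cast (R := ℂ)) h1
          push_cast at h2 ⊢
          rw [Nat.factorial_succ]
          push_cast
          linear_combination (k.factorial : ℂ) * h2
        simp only [Nat.add_sub_cancel]
        rw [show n + 1 + (m' + 1) - 2 * (k + 1) = n + m' - 2 * k from by omega]
        linear_combination (-(n.choose k : ℂ) * z ^ (n + m' - 2 * k)) * hmc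
  
lemma gInt_zero_left (α : ℝ) (m : ℕ) :
    gInt α (hermite 0 * hermite m)
      = ((Real.sqrt (2 * π) * Real.exp (-α ^ 2 / 2) : ℝ) : ℂ) * (Complex.I * α) ^ m := by
  induction m with
  | zero =>
      rw [hermite_zero, C_1, one_mul, gInt_one, pow_zero, mul_one]
  | succ m ih =>
      rw [mul_comm, gInt_rec α m 0, Nat.cast_zero, zero_mul, add_zero, mul_comm (hermite m), ih,
        pow_succ]
      ring

lemma gInt_formula (α : ℝ) : ∀ n m : ℕ, gInt α (hermite n * hermite m)
    = ((Real.sqrt (2 * π) * Real.exp (-α ^ 2 / 2) : ℝ) : ℂ) *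
      ∑ k ∈ Finset.range (n + 1),
        ((n.choose k : ℂ) * (m.choose k : ℂ) * (k.factorial : ℂ)) *
          (Complex.I * α) ^ (n + m - 2 * k) := by
  intro n
  induction n with
  | zero =>
      intro m
      rw [gInt_zero_left]
      simp
  | succ n ih =>
      intro m
      rw [gInt_rec α n m, ih m, ih (m-1), show n + 1 + 1 = n + 2 from rfl,
        sum_identity (Complex.I * α) n m]
      ring

end JAux

theorem J_integral_eq_sum (n m : ℕ) (hnm : n ≤ m) (α : ℝ) :
    (∫ x : ℝ, (oscFun n x * oscFun m x : ℂ) * Complex.exp (Complex.I * α * x))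
      = (Real.exp (-α ^ 2 / 2) / Real.sqrt (n.factorial * m.factorial) : ℝ) *
        ∑ k ∈ Finset.range (n + 1),
          ((n.choose k : ℂ) * (m.choose k : ℂ) * (k.factorial : ℂ)) *
            (Complex.I * α) ^ (n + m - 2 * k) := by
  classical
  set C : ℝ := (Real.sqrt (Real.sqrt (2 * π) * n.factorial))⁻¹ *
    (Real.sqrt (Real.sqrt (2 * π) * m.factorial))⁻¹ with hC
  have hpt : ∀ x : ℝ, oscFun n x * oscFun m x
      = C * ((Polynomial.aeval x (Polynomial.hermite n * Polynomial.hermite m) : ℝ)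
          * Real.exp (-(1/2) * x ^ 2)) := by
    intro x
    have hexp : Real.exp (-x ^ 2 / 4) * Real.exp (-x ^ 2 / 4)
        = Real.exp (-(1/2) * x ^ 2) := by
      rw [← Real.exp_add]
      ring_nf
    calc oscFun n x * oscFun m x
        = C * ((Polynomial.aeval x (Polynomial.hermite n) * Polynomial.aeval x (Polynomial.hermite m))
            * (Real.exp (-x ^ 2 / 4) * Real.exp (-x ^ 2 / 4))) := by
          simp only [oscFun, hC]; ring
      _ = _ := by rw [hexp, ← map_mul]
  have hint : (∫ x : ℝ, (oscFun n x * oscFun m x : ℂ) * Complex.exp (Complex.I * α * x))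
      = (C : ℂ) * JAux.gInt α (Polynomial.hermite n * Polynomial.hermite m) := by
    rw [JAux.gInt, ← integral_const_mul]
    refine integral_congr_ae (Filter.Eventually.of_forall fun x => ?_)
    have h := hpt x
    calc (oscFun n x : ℂ) * (oscFun m x : ℂ) * Complex.exp (Complex.I * α * x)
        = ((oscFun n x * oscFun m x : ℝ) : ℂ) * Complex.exp (Complex.I * α * x) := by
          push_cast; ring
      _ = _ := by rw [h]; push_cast; ring
  rw [hint, JAux.gInt_formula α n m, ← mul_assoc, ← Complex.ofReal_mul]
  congr 2
  rw [hC]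
  have hs : Real.sqrt (Real.sqrt (2 * π) * n.factorial) * Real.sqrt (Real.sqrt (2 * π) * m.factorial)
      = Real.sqrt (2 * π) * Real.sqrt (n.factorial * m.factorial) := by
    rw [← Real.sqrt_mul (by positivity),
      show Real.sqrt (2 * π) * (n.factorial : ℝ) * (Real.sqrt (2 * π) * (m.factorial : ℝ))
        = (Real.sqrt (2 * π) * Real.sqrt (2 * π)) * ((n.factorial : ℝ) * (m.factorial : ℝ)) from by ring,
      Real.mul_self_sqrt (by positivity), Real.sqrt_mul (by positivity)]
  have h3 : (0:ℝ) < Real.sqrt (2 * π) := by positivity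
  rw [← mul_inv, hs, mul_inv]
  calc (Real.sqrt (2 * π))⁻¹ * (Real.sqrt ((n.factorial : ℝ) * m.factorial))⁻¹ *
        (Real.sqrt (2 * π) * Real.exp (-α ^ 2 / 2))
      = ((Real.sqrt (2 * π))⁻¹ * Real.sqrt (2 * π)) *
          ((Real.sqrt ((n.factorial : ℝ) * m.factorial))⁻¹ * Real.exp (-α ^ 2 / 2)) := by ring
    _ = _ := by rw [inv_mul_cancel₀ h3.ne', one_mul, inv_mul_eq_div]
end

section
/- For ρ a d×d density matrix and D a d×d unitary matrix with tr(D²) having modulus at most d, the Haar average of the decoherence factor satisfies: ∫ tr[(U†⊗U†)(ρ⊗ρ)(U⊗U)(D⊗D†)] dU = |tr D|² (d − tr ρ²)/(d(d²−1)) + (d tr ρ² − 1)/(d²−1), where dU is the Haar probability measure on U(d), assuming the twirling identity ∫ (U⊗U)(X⊗X)(U†⊗U†) dU = [2/(d(d+1))] tr(Π_sym X⊗X) Π_sym + [2/(d(d−1))] tr(Π_asym X⊗X) Π_asym for Hermitian X. -/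
open Matrix MeasureTheory
open scoped Kronecker ComplexOrder

attribute [local instance] Matrix.linftyOpNormedAddCommGroup Matrix.linftyOpNormedSpace

/-- The swap operator `V(x ⊗ y) = y ⊗ x` on `ℂ^d ⊗ ℂ^d`. -/
def swapMatrix (d : ℕ) : Matrix (Fin d × Fin d) (Fin d × Fin d) ℂ :=
  fun p q => if p.1 = q.2 ∧ p.2 = q.1 then 1 else 0

lemma matrix_div_two {n : Type*} [Fintype n] [DecidableEq n] (M : Matrix n n ℂ) :
    M / 2 = (2⁻¹ : ℂ) • M := by
  have h : (2 : Matrix n n ℂ)⁻¹ = (2⁻¹ : ℂ) • 1 := by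
    apply Matrix.inv_eq_right_inv
    rw [mul_smul_comm, mul_one, show (2 : Matrix n n ℂ) = (2:ℂ) • 1 by
      rw [two_smul, ← one_add_one_eq_two], smul_smul]
    norm_num
  rw [div_eq_mul_inv, h, mul_smul_comm, mul_one]

lemma swap_mul_swap (d : ℕ) : swapMatrix d * swapMatrix d = 1 := by
  ext ⟨i,j⟩ ⟨k,l⟩
  simp only [Matrix.mul_apply, swapMatrix, Matrix.one_apply]
  rw [Finset.sum_eq_single (j, i)]
  · simp [Prod.ext_iff, and_comm, eq_comm]
  · rintro ⟨a,b⟩ _ hne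
    simp only [ite_mul, one_mul, zero_mul, ite_eq_right_iff]
    rintro ⟨rfl, rfl⟩
    simp_all [Prod.ext_iff]
  · simp

lemma trace_swap (d : ℕ) : (swapMatrix d).trace = d := by
  simp only [Matrix.trace, Matrix.diag, swapMatrix, Fintype.sum_prod_type, ite_and]
  simp [Finset.sum_ite_eq, eq_comm]

lemma trace_swap_mul_kron {d : ℕ} (P Q : Matrix (Fin d) (Fin d) ℂ) :
    (swapMatrix d * (P ⊗ₖ Q)).trace = (P * Q).trace := by
  simp only [Matrix.trace, Matrix.diag, Matrix.mul_apply, swapMatrix, Matrix.kroneckerMap_apply,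
    Fintype.sum_prod_type, ite_mul, one_mul, zero_mul, ite_and]
  simp only [Finset.sum_ite_eq, Finset.sum_ite_eq', Finset.mem_univ, if_true]
  exact Finset.sum_comm.symm.trans (by simp [mul_comm])

lemma trace_piSym_kron {d : ℕ} (X Y : Matrix (Fin d) (Fin d) ℂ) :
    ((((1 : Matrix (Fin d × Fin d) (Fin d × Fin d) ℂ) + swapMatrix d)/2) * (X ⊗ₖ Y)).trace
      = 2⁻¹ * (X.trace * Y.trace + (X*Y).trace) := by
  rw [matrix_div_two, smul_mul_assoc, Matrix.trace_smul, add_mul, Matrix.trace_add, one_mul,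
    Matrix.trace_kronecker, trace_swap_mul_kron, smul_eq_mul]

lemma trace_piAsym_kron {d : ℕ} (X Y : Matrix (Fin d) (Fin d) ℂ) :
    ((((1 : Matrix (Fin d × Fin d) (Fin d × Fin d) ℂ) - swapMatrix d)/2) * (X ⊗ₖ Y)).trace
      = 2⁻¹ * (X.trace * Y.trace - (X*Y).trace) := by
  rw [matrix_div_two, smul_mul_assoc, Matrix.trace_smul, sub_mul, Matrix.trace_sub, one_mul,
    Matrix.trace_kronecker, trace_swap_mul_kron, smul_eq_mul]

lemma piSym_mul_swap (d : ℕ) :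
    (((1 : Matrix (Fin d × Fin d) (Fin d × Fin d) ℂ) + swapMatrix d)/2) * swapMatrix d
      = ((1 : Matrix (Fin d × Fin d) (Fin d × Fin d) ℂ) + swapMatrix d)/2 := by
  rw [matrix_div_two, smul_mul_assoc, add_mul, one_mul, swap_mul_swap, add_comm]

lemma piAsym_mul_swap (d : ℕ) :
    (((1 : Matrix (Fin d × Fin d) (Fin d × Fin d) ℂ) - swapMatrix d)/2) * swapMatrix d
      = -(((1 : Matrix (Fin d × Fin d) (Fin d × Fin d) ℂ) - swapMatrix d)/2) := by
  rw [matrix_div_two, smul_mul_assoc, sub_mul, one_mul, swap_mul_swap, ← smul_neg, neg_sub]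

lemma trace_piSym {d : ℕ} :
    (((1 : Matrix (Fin d × Fin d) (Fin d × Fin d) ℂ) + swapMatrix d)/2).trace
      = 2⁻¹ * ((d:ℂ)^2 + d) := by
  rw [matrix_div_two, Matrix.trace_smul, Matrix.trace_add, Matrix.trace_one, trace_swap,
    smul_eq_mul]
  simp [sq]

lemma trace_piAsym {d : ℕ} :
    (((1 : Matrix (Fin d × Fin d) (Fin d × Fin d) ℂ) - swapMatrix d)/2).trace
      = 2⁻¹ * ((d:ℂ)^2 - d) := by
  rw [matrix_div_two, Matrix.trace_smul, Matrix.trace_sub, Matrix.trace_one, trace_swap,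
    smul_eq_mul]
  simp [sq]

lemma herm_trace_zero {n : Type*} [Fintype n] (X : Matrix n n ℂ)
    (h : (Xᴴ * X).trace = 0) : X = 0 := by
  have h2 : ((∑ j, ∑ i, Complex.normSq (X i j) : ℝ) : ℂ) = 0 := by
    rw [← h]
    simp only [Matrix.trace, Matrix.diag, Matrix.mul_apply, Matrix.conjTranspose_apply]
    push_cast
    simp [Complex.normSq_eq_conj_mul_self]
  rw [Complex.ofReal_eq_zero] at h2
  have h3 := (Finset.sum_eq_zero_iff_of_nonneg (fun j _ =>
    Finset.sum_nonneg fun i _ => Complex.normSq_nonneg _)).mp h2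
  ext i j
  have h4 := (Finset.sum_eq_zero_iff_of_nonneg (fun i _ => Complex.normSq_nonneg _)).mp
    (h3 j (Finset.mem_univ j)) i (Finset.mem_univ i)
  simpa using Complex.normSq_eq_zero.mp h4

lemma pointwise_tr {d : ℕ} (ρ D A B U : Matrix (Fin d) (Fin d) ℂ)
    (hDA : D = A + Complex.I • B) (hDAc : Dᴴ = A - Complex.I • B) :
    ((Uᴴ ⊗ₖ Uᴴ) * (ρ ⊗ₖ ρ) * (U ⊗ₖ U) * (D ⊗ₖ Dᴴ)).trace
      = ((ρ ⊗ₖ ρ) * ((U ⊗ₖ U) * (A ⊗ₖ A) * (Uᴴ ⊗ₖ Uᴴ))).trace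
        + ((ρ ⊗ₖ ρ) * ((U ⊗ₖ U) * (B ⊗ₖ B) * (Uᴴ ⊗ₖ Uᴴ))).trace := by
  rw [← Matrix.mul_kronecker_mul, ← Matrix.mul_kronecker_mul, ← Matrix.mul_kronecker_mul,
    ← Matrix.mul_kronecker_mul, ← Matrix.mul_kronecker_mul, ← Matrix.mul_kronecker_mul,
    ← Matrix.mul_kronecker_mul, ← Matrix.mul_kronecker_mul, ← Matrix.mul_kronecker_mul,
    Matrix.trace_kronecker, Matrix.trace_kronecker, Matrix.trace_kronecker]
  have cyc : ∀ X : Matrix (Fin d) (Fin d) ℂ,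
      (ρ * U * X * Uᴴ).trace = (Uᴴ * ρ * U * X).trace := by
    intro X
    rw [Matrix.trace_mul_comm, ← Matrix.mul_assoc, ← Matrix.mul_assoc]
  simp only [← Matrix.mul_assoc]
  rw [cyc, cyc]
  set M := Uᴴ * ρ * U with hM
  have h1 : (M * D).trace = (M * A).trace + Complex.I * (M * B).trace := by
    rw [hDA, Matrix.mul_add, Matrix.trace_add, Matrix.mul_smul, Matrix.trace_smul, smul_eq_mul]
  have h2 : (M * Dᴴ).trace = (M * A).trace - Complex.I * (M * B).trace := by
    rw [hDAc, Matrix.mul_sub, Matrix.trace_sub, Matrix.mul_smul, Matrix.trace_smul, smul_eq_mul]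
  rw [h1, h2]
  linear_combination (-(M * B).trace ^ 2) * Complex.I_sq

set_option maxHeartbeats 2000000 in
theorem haar_average_decoherence_factor {d : ℕ} (hd : 1 < d)
    [MeasurableSpace (Matrix.unitaryGroup (Fin d) ℂ)]
    (μ : Measure (Matrix.unitaryGroup (Fin d) ℂ)) [IsProbabilityMeasure μ]
    (ρ D : Matrix (Fin d) (Fin d) ℂ)
    (hρ : ρ.PosSemidef) (hρtr : ρ.trace = 1)
    (hD : D ∈ Matrix.unitaryGroup (Fin d) ℂ) (hDdiag : D.IsDiag)
    (hD2 : ‖(D * D).trace‖ ≤ d)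
    (htwirl : ∀ X : Matrix (Fin d) (Fin d) ℂ, X.IsHermitian →
      (∫ U : Matrix.unitaryGroup (Fin d) ℂ,
          ((U : Matrix (Fin d) (Fin d) ℂ) ⊗ₖ (U : Matrix (Fin d) (Fin d) ℂ)) * (X ⊗ₖ X) *
            (((U : Matrix (Fin d) (Fin d) ℂ)ᴴ) ⊗ₖ ((U : Matrix (Fin d) (Fin d) ℂ)ᴴ)) ∂μ)
        = (2 / (d * (d + 1)) : ℂ) •
            ((((1 + swapMatrix d) / 2) * (X ⊗ₖ X)).trace • ((1 + swapMatrix d) / 2))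
          + (2 / (d * (d - 1)) : ℂ) •
            ((((1 - swapMatrix d) / 2) * (X ⊗ₖ X)).trace • ((1 - swapMatrix d) / 2))) :
    (∫ U : Matrix.unitaryGroup (Fin d) ℂ,
        ((((U : Matrix (Fin d) (Fin d) ℂ)ᴴ) ⊗ₖ ((U : Matrix (Fin d) (Fin d) ℂ)ᴴ)) * (ρ ⊗ₖ ρ) *
          (((U : Matrix (Fin d) (Fin d) ℂ)) ⊗ₖ ((U : Matrix (Fin d) (Fin d) ℂ))) *
          (D ⊗ₖ Dᴴ)).trace ∂μ)
      = ((‖D.trace‖ : ℂ) ^ 2) * ((d : ℂ) - (ρ * ρ).trace) / (d * (d ^ 2 - 1))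
        + ((d : ℂ) * (ρ * ρ).trace - 1) / (d ^ 2 - 1) := by
  -- basic nonvanishing facts
  have hd0 : (d:ℂ) ≠ 0 := Nat.cast_ne_zero.2 (by omega)
  have hd1 : (d:ℂ) + 1 ≠ 0 := by
    intro h
    have : ((d+1 : ℕ) : ℂ) = 0 := by push_cast; linear_combination h
    exact absurd (Nat.cast_eq_zero.mp this) (by omega)
  have hdm1 : (d:ℂ) - 1 ≠ 0 := by
    intro h
    have : (d:ℂ) = 1 := by linear_combination h
    exact absurd (Nat.cast_eq_one.mp this) (by omega)
  -- Hermitian/antihermitian parts of D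
  set A : Matrix (Fin d) (Fin d) ℂ := (2⁻¹ : ℂ) • (D + Dᴴ) with hAdef
  set B : Matrix (Fin d) (Fin d) ℂ := (-(2⁻¹ : ℂ) * Complex.I) • (D - Dᴴ) with hBdef
  have hDA : D = A + Complex.I • B := by
    rw [hAdef, hBdef, smul_smul]
    have : Complex.I * (-(2⁻¹:ℂ) * Complex.I) = 2⁻¹ := by
      linear_combination (-(2⁻¹ : ℂ)) * Complex.I_mul_I
    rw [this]
    module
  have hDAc : Dᴴ = A - Complex.I • B := by
    rw [hAdef, hBdef, smul_smul]
    have : Complex.I * (-(2⁻¹:ℂ) * Complex.I) = 2⁻¹ := by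
      linear_combination (-(2⁻¹ : ℂ)) * Complex.I_mul_I
    rw [this]
    module
  have hAH : A.IsHermitian := by
    rw [Matrix.IsHermitian, hAdef, Matrix.conjTranspose_smul, Matrix.conjTranspose_add,
      Matrix.conjTranspose_conjTranspose]
    rw [show (star (2⁻¹:ℂ)) = (2⁻¹:ℂ) by simp]
    rw [add_comm]
  have hBH : B.IsHermitian := by
    rw [Matrix.IsHermitian, hBdef, Matrix.conjTranspose_smul, Matrix.conjTranspose_sub,
      Matrix.conjTranspose_conjTranspose]
    rw [show (star (-(2⁻¹:ℂ) * Complex.I)) = (2⁻¹:ℂ) * Complex.I by simp]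
    rw [show Dᴴ - D = -(D - Dᴴ) by abel, smul_neg, ← neg_smul]
    congr 1
    ring
  -- the key integral computation for a Hermitian X
  set C : Matrix (Fin d × Fin d) (Fin d × Fin d) ℂ := ρ ⊗ₖ ρ with hCdef
  set Ps : Matrix (Fin d × Fin d) (Fin d × Fin d) ℂ := (1 + swapMatrix d) / 2 with hPs
  set Pa : Matrix (Fin d × Fin d) (Fin d × Fin d) ℂ := (1 - swapMatrix d) / 2 with hPa
  set L : Matrix (Fin d × Fin d) (Fin d × Fin d) ℂ →L[ℂ] ℂ :=
    LinearMap.toContinuousLinearMap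
      ((Matrix.traceLinearMap (Fin d × Fin d) ℂ ℂ).comp (LinearMap.mulLeft ℂ C)) with hLdef
  have hL : ∀ M : Matrix (Fin d × Fin d) (Fin d × Fin d) ℂ, L M = (C * M).trace := fun M => rfl
  have key : ∀ X : Matrix (Fin d) (Fin d) ℂ, X.IsHermitian →
      Integrable (fun U : Matrix.unitaryGroup (Fin d) ℂ =>
        (C * (((U : Matrix (Fin d) (Fin d) ℂ) ⊗ₖ (U : Matrix (Fin d) (Fin d) ℂ)) * (X ⊗ₖ X) *
          (((U : Matrix (Fin d) (Fin d) ℂ)ᴴ) ⊗ₖ ((U : Matrix (Fin d) (Fin d) ℂ)ᴴ)))).trace) μ ∧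
      (∫ U : Matrix.unitaryGroup (Fin d) ℂ,
        (C * (((U : Matrix (Fin d) (Fin d) ℂ) ⊗ₖ (U : Matrix (Fin d) (Fin d) ℂ)) * (X ⊗ₖ X) *
          (((U : Matrix (Fin d) (Fin d) ℂ)ᴴ) ⊗ₖ ((U : Matrix (Fin d) (Fin d) ℂ)ᴴ)))).trace ∂μ)
        = (2 / (d * (d + 1)) : ℂ) * ((Ps * (X ⊗ₖ X)).trace) * (C * Ps).trace
          + (2 / (d * (d - 1)) : ℂ) * ((Pa * (X ⊗ₖ X)).trace) * (C * Pa).trace := by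
    intro X hX
    by_cases hX0 : X = 0
    · subst hX0
      constructor
      · simpa using (integrable_const (0:ℂ)).congr (by simp)
      · simp
    · -- X ≠ 0 : the twirl target is nonzero, so the integrand is integrable
      have hMne : (2 / (d * (d + 1)) : ℂ) • ((Ps * (X ⊗ₖ X)).trace • Ps)
          + (2 / (d * (d - 1)) : ℂ) • ((Pa * (X ⊗ₖ X)).trace • Pa) ≠ 0 := by
        intro h0
        have htr := congrArg (fun M => (M * swapMatrix d).trace) h0
        simp only [Matrix.add_mul, Matrix.smul_mul, hPs, hPa, piSym_mul_swap, piAsym_mul_swap,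
          Matrix.trace_add, Matrix.trace_smul, smul_eq_mul, Matrix.zero_mul,
          Matrix.trace_zero, Matrix.mul_neg, Matrix.trace_neg, trace_piSym, trace_piAsym,
          trace_piSym_kron, trace_piAsym_kron] at htr
        have hXX : (X * X).trace = 0 := by
          field_simp at htr
          have hfac : (X*X).trace * (16 * (d:ℂ)^2 * ((d:ℂ)-1) * ((d:ℂ)+1)) = 0 := by
            linear_combination (8*(d:ℂ)^2*((d:ℂ)^2-1)) * htr
          have hne : (16 * (d:ℂ)^2 * ((d:ℂ)-1) * ((d:ℂ)+1)) ≠ 0 :=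
            mul_ne_zero (mul_ne_zero (mul_ne_zero (by norm_num) (pow_ne_zero 2 hd0)) hdm1) hd1
          exact (mul_eq_zero.mp hfac).resolve_right hne
        have : Xᴴ * X = X * X := by rw [hX.eq]
        exact hX0 (herm_trace_zero X (by rw [this]; exact hXX))
      have hInt : @Integrable _ UniformSpace.toTopologicalSpace SeminormedAddGroup.toContinuousENorm _ _ (fun U : Matrix.unitaryGroup (Fin d) ℂ =>
          ((U : Matrix (Fin d) (Fin d) ℂ) ⊗ₖ (U : Matrix (Fin d) (Fin d) ℂ)) * (X ⊗ₖ X) *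
            (((U : Matrix (Fin d) (Fin d) ℂ)ᴴ) ⊗ₖ ((U : Matrix (Fin d) (Fin d) ℂ)ᴴ))) μ := by
        by_contra hni
        exact hMne ((htwirl X hX).symm.trans (integral_undef hni))
      refine ⟨L.integrable_comp hInt, ?_⟩
      have hcomm := ContinuousLinearMap.integral_comp_comm L hInt
      rw [htwirl X hX] at hcomm
      calc (∫ U : Matrix.unitaryGroup (Fin d) ℂ,
            (C * (((U : Matrix (Fin d) (Fin d) ℂ) ⊗ₖ (U : Matrix (Fin d) (Fin d) ℂ)) * (X ⊗ₖ X) *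
              (((U : Matrix (Fin d) (Fin d) ℂ)ᴴ) ⊗ₖ ((U : Matrix (Fin d) (Fin d) ℂ)ᴴ)))).trace ∂μ)
          = L ((2 / (d * (d + 1)) : ℂ) • ((Ps * (X ⊗ₖ X)).trace • Ps)
              + (2 / (d * (d - 1)) : ℂ) • ((Pa * (X ⊗ₖ X)).trace • Pa)) := hcomm
        _ = _ := by
            rw [hL, Matrix.mul_add, Matrix.mul_smul, Matrix.mul_smul, Matrix.mul_smul,
              Matrix.mul_smul, Matrix.trace_add, Matrix.trace_smul, Matrix.trace_smul,
              Matrix.trace_smul, Matrix.trace_smul]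
            simp only [smul_eq_mul]
            ring
  -- unitarity of D
  have hu1 : D * Dᴴ = 1 := by
    rw [← Matrix.star_eq_conjTranspose]
    exact Matrix.mem_unitaryGroup_iff.mp hD
  have hu2 : Dᴴ * D = 1 := by
    rw [← Matrix.star_eq_conjTranspose]
    exact Matrix.mem_unitaryGroup_iff'.mp hD
  -- scalar relations
  have habs : ((‖D.trace‖ : ℂ))^2 = (starRingEnd ℂ) D.trace * D.trace := by
    rw [← Complex.ofReal_pow, Complex.sq_norm, Complex.normSq_eq_conj_mul_self]
  have hzA : A.trace = (2⁻¹:ℂ) * (D.trace + (starRingEnd ℂ) D.trace) := by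
    rw [hAdef, Matrix.trace_smul, Matrix.trace_add, Matrix.trace_conjTranspose, smul_eq_mul]
    rfl
  have hzB : B.trace = (-(2⁻¹:ℂ) * Complex.I) * (D.trace - (starRingEnd ℂ) D.trace) := by
    rw [hBdef, Matrix.trace_smul, Matrix.trace_sub, Matrix.trace_conjTranspose, smul_eq_mul]
    rfl
  have hz : A.trace * A.trace + B.trace * B.trace = ((‖D.trace‖ : ℂ))^2 := by
    rw [hzA, hzB, habs]
    linear_combination (4⁻¹ * (D.trace - (starRingEnd ℂ) D.trace)^2) * Complex.I_mul_I
  have hAA2 : A * A = ((2⁻¹:ℂ) * 2⁻¹) • ((D + Dᴴ) * (D + Dᴴ)) := by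
    rw [hAdef, smul_mul_assoc, mul_smul_comm, smul_smul]
  have hBB2 : B * B = ((-(2⁻¹:ℂ) * Complex.I) * (-(2⁻¹:ℂ) * Complex.I)) • ((D - Dᴴ) * (D - Dᴴ)) := by
    rw [hBdef, smul_mul_assoc, mul_smul_comm, smul_smul]
  have hexp1 : ((D + Dᴴ) * (D + Dᴴ)).trace = (D*D).trace + (Dᴴ*Dᴴ).trace + 2*(d:ℂ) := by
    rw [Matrix.add_mul, Matrix.mul_add, Matrix.mul_add, Matrix.trace_add, Matrix.trace_add,
      Matrix.trace_add, hu1, hu2, Matrix.trace_one]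
    simp only [Fintype.card_fin, Complex.ofReal_natCast]
    push_cast
    ring
  have hexp2 : ((D - Dᴴ) * (D - Dᴴ)).trace = (D*D).trace + (Dᴴ*Dᴴ).trace - 2*(d:ℂ) := by
    rw [Matrix.sub_mul, Matrix.mul_sub, Matrix.mul_sub, Matrix.trace_sub, Matrix.trace_sub,
      Matrix.trace_sub, hu1, hu2, Matrix.trace_one]
    simp only [Fintype.card_fin, Complex.ofReal_natCast]
    push_cast
    ring
  have hw : (A*A).trace + (B*B).trace = (d:ℂ) := by
    rw [hAA2, hBB2, Matrix.trace_smul, Matrix.trace_smul, hexp1, hexp2, smul_eq_mul, smul_eq_mul]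
    linear_combination (4⁻¹ * ((D*D).trace + (Dᴴ*Dᴴ).trace - 2*(d:ℂ))) * Complex.I_mul_I
  -- assemble the integral
  have step1 : (∫ U : Matrix.unitaryGroup (Fin d) ℂ,
        ((((U : Matrix (Fin d) (Fin d) ℂ)ᴴ) ⊗ₖ ((U : Matrix (Fin d) (Fin d) ℂ)ᴴ)) * (ρ ⊗ₖ ρ) *
          (((U : Matrix (Fin d) (Fin d) ℂ)) ⊗ₖ ((U : Matrix (Fin d) (Fin d) ℂ))) *
          (D ⊗ₖ Dᴴ)).trace ∂μ)
      = (∫ U : Matrix.unitaryGroup (Fin d) ℂ,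
          (C * (((U : Matrix (Fin d) (Fin d) ℂ) ⊗ₖ (U : Matrix (Fin d) (Fin d) ℂ)) * (A ⊗ₖ A) *
            (((U : Matrix (Fin d) (Fin d) ℂ)ᴴ) ⊗ₖ ((U : Matrix (Fin d) (Fin d) ℂ)ᴴ)))).trace ∂μ)
        + (∫ U : Matrix.unitaryGroup (Fin d) ℂ,
          (C * (((U : Matrix (Fin d) (Fin d) ℂ) ⊗ₖ (U : Matrix (Fin d) (Fin d) ℂ)) * (B ⊗ₖ B) *
            (((U : Matrix (Fin d) (Fin d) ℂ)ᴴ) ⊗ₖ ((U : Matrix (Fin d) (Fin d) ℂ)ᴴ)))).trace ∂μ) := by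
    rw [← integral_add (key A hAH).1 (key B hBH).1]
    exact integral_congr_ae (Filter.Eventually.of_forall fun U =>
      pointwise_tr ρ D A B (U : Matrix (Fin d) (Fin d) ℂ) hDA hDAc)
  rw [step1, (key A hAH).2, (key B hBH).2]
  -- trace values
  set t : ℂ := (ρ * ρ).trace with htdef
  have hCPs : (C * Ps).trace = 2⁻¹ * (1 + t) := by
    rw [Matrix.trace_mul_comm, hPs, hCdef, trace_piSym_kron, hρtr]
    ring
  have hCPa : (C * Pa).trace = 2⁻¹ * (1 - t) := by
    rw [Matrix.trace_mul_comm, hPa, hCdef, trace_piAsym_kron, hρtr]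
    ring
  have hPsA : (Ps * (A ⊗ₖ A)).trace = 2⁻¹ * (A.trace * A.trace + (A*A).trace) := by
    rw [hPs, trace_piSym_kron]
  have hPaA : (Pa * (A ⊗ₖ A)).trace = 2⁻¹ * (A.trace * A.trace - (A*A).trace) := by
    rw [hPa, trace_piAsym_kron]
  have hPsB : (Ps * (B ⊗ₖ B)).trace = 2⁻¹ * (B.trace * B.trace + (B*B).trace) := by
    rw [hPs, trace_piSym_kron]
  have hPaB : (Pa * (B ⊗ₖ B)).trace = 2⁻¹ * (B.trace * B.trace - (B*B).trace) := by
    rw [hPa, trace_piAsym_kron]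
  rw [hCPs, hCPa, hPsA, hPaA, hPsB, hPaB]
  have hzz : B.trace * B.trace = ((‖D.trace‖ : ℂ))^2 - A.trace * A.trace := by
    linear_combination hz
  have hww : (B*B).trace = (d:ℂ) - (A*A).trace := by
    linear_combination hw
  rw [hzz, hww]
  have h21 : ((d:ℂ)^2 - 1) ≠ 0 := by
    have he : (d:ℂ)^2 - 1 = ((d:ℂ)-1)*((d:ℂ)+1) := by ring
    rw [he]
    exact mul_ne_zero hdm1 hd1
  field_simp [h21]
  ring
end

section
/- For any two density matrices ρ, σ the fidelity F(ρ,σ) = (tr √(√ρ σ √ρ))² is bounded above by the super-fidelity G(ρ,σ) = tr(ρσ) + √((1 − tr ρ²)(1 − tr σ²)). -/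
open Matrix
open scoped ComplexOrder

/-- The positive semidefinite square root of a positive semidefinite matrix (as in the older
Mathlib `Matrix.PosSemidef.sqrt`, since removed). -/
noncomputable def Matrix.PosSemidef.sqrt {n : Type*} [Fintype n] [DecidableEq n] {𝕜 : Type*}
    [RCLike 𝕜] {A : Matrix n n 𝕜} (hA : A.PosSemidef) : Matrix n n 𝕜 :=
  hA.1.eigenvectorUnitary.1 * diagonal ((↑) ∘ (√·) ∘ hA.1.eigenvalues) *
    (star hA.1.eigenvectorUnitary : Matrix n n 𝕜)

lemma Matrix.PosSemidef.posSemidef_sqrt {n : Type*} [Fintype n] [DecidableEq n] {𝕜 : Type*}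
    [RCLike 𝕜] {A : Matrix n n 𝕜} (hA : A.PosSemidef) : hA.sqrt.PosSemidef := by
  have hE : (diagonal ((↑) ∘ (√·) ∘ hA.1.eigenvalues) : Matrix n n 𝕜).PosSemidef :=
    posSemidef_diagonal_iff.mpr fun i => by
      simp only [Function.comp_apply]
      exact RCLike.ofReal_nonneg.mpr (Real.sqrt_nonneg _)
  have := hE.mul_mul_conjTranspose_same (hA.1.eigenvectorUnitary : Matrix n n 𝕜)
  rw [← Matrix.star_eq_conjTranspose] at this
  exact this

lemma Matrix.PosSemidef.sqrt_mul_self {n : Type*} [Fintype n] [DecidableEq n] {𝕜 : Type*}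
    [RCLike 𝕜] {A : Matrix n n 𝕜} (hA : A.PosSemidef) : hA.sqrt * hA.sqrt = A := by
  have hU : (star hA.1.eigenvectorUnitary : Matrix n n 𝕜) * hA.1.eigenvectorUnitary = 1 :=
    Unitary.coe_star_mul_self _
  have hE : diagonal ((↑) ∘ (√·) ∘ hA.1.eigenvalues) * diagonal ((↑) ∘ (√·) ∘ hA.1.eigenvalues)
      = diagonal (RCLike.ofReal ∘ hA.1.eigenvalues : n → 𝕜) := by
    rw [diagonal_mul_diagonal]; congr 1; funext i
    simp only [Function.comp_apply]
    rw [← RCLike.ofReal_mul, Real.mul_self_sqrt (hA.eigenvalues_nonneg i)]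
  have hc : ∀ U V E : Matrix n n 𝕜, V * U = 1 → U * E * V * (U * E * V) = U * (E * E) * V :=
    fun U V E h => by
      simp only [Matrix.mul_assoc]; rw [← Matrix.mul_assoc V U, h, Matrix.one_mul]
  unfold Matrix.PosSemidef.sqrt
  rw [hc _ _ _ hU, hE]
  have hs := hA.1.spectral_theorem
  rw [Unitary.conjStarAlgAut_apply] at hs
  exact hs.symm

namespace SuperFid

open Finset

section Compound


variable {n : Type*} [Fintype n] [DecidableEq n] [LinearOrder n]

set_option linter.unusedSectionVars false

lemma pair_sum (h : n × n → ℂ) (hd : ∀ i, h (i, i) = 0) :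
    ∑ x : n × n, h x = ∑ p : {p : n × n // p.1 < p.2}, (h p.val + h p.val.swap) := by
  classical
  have h1 : ∑ x : n × n, h x
      = ∑ x ∈ univ.filter (fun x : n × n => x.1 < x.2), h x
        + ∑ x ∈ univ.filter (fun x : n × n => ¬ x.1 < x.2), h x :=
    (Finset.sum_filter_add_sum_filter_not _ _ _).symm
  have h2 : ∑ x ∈ univ.filter (fun x : n × n => ¬ x.1 < x.2), h x
      = ∑ x ∈ univ.filter (fun x : n × n => x.2 < x.1), h x := by
    refine (Finset.sum_subset ?_ ?_).symm
    · intro x hx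
      simp only [Finset.mem_filter, Finset.mem_univ, true_and] at hx ⊢
      exact not_lt_of_gt hx
    · intro x hx hx'
      simp only [Finset.mem_filter, Finset.mem_univ, true_and] at hx hx'
      have : x.1 = x.2 := le_antisymm (not_lt.mp hx') (not_lt.mp hx)
      have : x = (x.1, x.1) := by rw [Prod.ext_iff]; exact ⟨rfl, this.symm⟩
      rw [this, hd]
  have h3 : ∑ x ∈ univ.filter (fun x : n × n => x.2 < x.1), h x
      = ∑ x ∈ univ.filter (fun x : n × n => x.1 < x.2), h x.swap := by
    refine Finset.sum_equiv (Equiv.prodComm n n) ?_ ?_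
    · intro x; simp [Equiv.prodComm]
    · intro x hx; rfl
  have h4 : ∑ x ∈ univ.filter (fun x : n × n => x.1 < x.2), (h x + h x.swap)
      = ∑ p : {p : n × n // p.1 < p.2}, (h p.val + h p.val.swap) := by
    rw [Finset.sum_subtype (univ.filter (fun x : n × n => x.1 < x.2))]
    intro x; simp
  rw [h1, h2, h3, ← h4, ← Finset.sum_add_distrib]

/-- The second compound (exterior square) of a matrix. -/
def c2 (M : Matrix n n ℂ) : Matrix {p : n × n // p.1 < p.2} {p : n × n // p.1 < p.2} ℂ :=
  fun p q => M p.val.1 q.val.1 * M p.val.2 q.val.2 - M p.val.1 q.val.2 * M p.val.2 q.val.1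

lemma c2_mul (M N : Matrix n n ℂ) : c2 (M * N) = c2 M * c2 N := by
  ext p q
  have key := pair_sum (fun x : n × n =>
      M p.val.1 x.1 * M p.val.2 x.2 *
        (N x.1 q.val.1 * N x.2 q.val.2 - N x.1 q.val.2 * N x.2 q.val.1))
    (by intro i; ring)
  have lhs : ∑ x : n × n,
      M p.val.1 x.1 * M p.val.2 x.2 *
        (N x.1 q.val.1 * N x.2 q.val.2 - N x.1 q.val.2 * N x.2 q.val.1)
      = c2 (M * N) p q := by
    rw [Fintype.sum_prod_type]
    simp only [mul_sub, Finset.sum_sub_distrib]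
    simp only [c2, Matrix.mul_apply]
    simp only [Finset.mul_sum, Finset.sum_mul]
    congr 1
    · rw [Finset.sum_comm]
      congr 1; ext k; congr 1; ext l; ring
    · rw [Finset.sum_comm]
      congr 1; ext k; congr 1; ext l; ring
  have rhs : ∑ r : {x : n × n // x.1 < x.2},
      ((fun x : n × n =>
        M p.val.1 x.1 * M p.val.2 x.2 *
          (N x.1 q.val.1 * N x.2 q.val.2 - N x.1 q.val.2 * N x.2 q.val.1)) r.val
      + (fun x : n × n =>
        M p.val.1 x.1 * M p.val.2 x.2 *
          (N x.1 q.val.1 * N x.2 q.val.2 - N x.1 q.val.2 * N x.2 q.val.1)) r.val.swap)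
      = (c2 M * c2 N) p q := by
    rw [Matrix.mul_apply]
    refine Finset.sum_congr rfl ?_
    intro r _
    simp only [c2, Prod.fst_swap, Prod.snd_swap]
    ring
  rw [← lhs, key, rhs]

lemma c2_conjTranspose (M : Matrix n n ℂ) : c2 Mᴴ = (c2 M)ᴴ := by
  ext p q
  simp only [c2, conjTranspose_apply, star_sub, star_mul']
  ring

lemma c2_posSemidef {A : Matrix n n ℂ} (hA : A.PosSemidef) : (c2 A).PosSemidef := by
  obtain ⟨B, rfl⟩ : ∃ B : Matrix n n ℂ, A = Bᴴ * B :=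
    ⟨hA.sqrt, by rw [hA.posSemidef_sqrt.1, hA.sqrt_mul_self]⟩
  rw [c2_mul, c2_conjTranspose]
  exact posSemidef_conjTranspose_mul_self _

lemma c2_trace (A : Matrix n n ℂ) :
    A.trace ^ 2 - (A * A).trace = 2 * (c2 A).trace := by
  have key := pair_sum (fun x : n × n => A x.1 x.1 * A x.2 x.2 - A x.1 x.2 * A x.2 x.1)
    (by intro i; ring)
  have lhs : ∑ x : n × n, (A x.1 x.1 * A x.2 x.2 - A x.1 x.2 * A x.2 x.1)
      = A.trace ^ 2 - (A * A).trace := by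
    rw [Fintype.sum_prod_type]
    simp only [Finset.sum_sub_distrib]
    congr 1
    · simp only [Matrix.trace, Matrix.diag, sq, Finset.mul_sum, Finset.sum_mul]
      rw [Finset.sum_comm]
  have rhs : ∑ p : {x : n × n // x.1 < x.2},
      ((fun x : n × n => A x.1 x.1 * A x.2 x.2 - A x.1 x.2 * A x.2 x.1) p.val
      + (fun x : n × n => A x.1 x.1 * A x.2 x.2 - A x.1 x.2 * A x.2 x.1) p.val.swap)
      = 2 * (c2 A).trace := by
    rw [Matrix.trace, Finset.mul_sum]
    refine Finset.sum_congr rfl ?_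
    intro r _
    simp only [c2, Matrix.diag, Prod.fst_swap, Prod.snd_swap]
    ring
  rw [← lhs, key, rhs]


end Compound

section Analytic

variable {m n : Type*} [Fintype m] [Fintype n] [DecidableEq n]

set_option linter.unusedSectionVars false
set_option maxHeartbeats 1000000


variable {m n : Type*} [Fintype m] [Fintype n] [DecidableEq n]

set_option linter.unusedSectionVars false

lemma trace_conjTranspose_mul_re (X : Matrix m n ℂ) :
    (Xᴴ * X).trace.re = ∑ x : n × m, ‖X x.2 x.1‖ ^ 2 := by
  rw [Matrix.trace, Fintype.sum_prod_type]
  rw [Complex.re_sum]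
  refine Finset.sum_congr rfl fun j _ => ?_
  rw [Matrix.diag, Matrix.mul_apply, Complex.re_sum]
  refine Finset.sum_congr rfl fun i _ => ?_
  rw [Matrix.conjTranspose_apply]
  have : star (X i j) * X i j = X i j * (starRingEnd ℂ) (X i j) := mul_comm _ _
  rw [this, Complex.mul_conj, Complex.ofReal_re]
  exact (Complex.sq_norm _).symm

/-- Cauchy–Schwarz for the Frobenius inner product. -/
lemma trace_cs (X Y : Matrix m n ℂ) :
    (Xᴴ * Y).trace.re ≤ Real.sqrt ((Xᴴ * X).trace.re) * Real.sqrt ((Yᴴ * Y).trace.re) := by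
  have h1 : (Xᴴ * Y).trace.re
      = ∑ x : n × m, ((starRingEnd ℂ) (X x.2 x.1) * Y x.2 x.1).re := by
    rw [Matrix.trace, Fintype.sum_prod_type, Complex.re_sum]
    refine Finset.sum_congr rfl fun j _ => ?_
    rw [Matrix.diag, Matrix.mul_apply, Complex.re_sum]
    exact Finset.sum_congr rfl fun i _ => rfl
  have h2 : ∀ x : n × m, ((starRingEnd ℂ) (X x.2 x.1) * Y x.2 x.1).re
      ≤ ‖X x.2 x.1‖ * ‖Y x.2 x.1‖ := by
    intro x
    calc ((starRingEnd ℂ) (X x.2 x.1) * Y x.2 x.1).re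
        ≤ ‖(starRingEnd ℂ) (X x.2 x.1) * Y x.2 x.1‖ := Complex.re_le_norm _
      _ = ‖X x.2 x.1‖ * ‖Y x.2 x.1‖ := by
          rw [norm_mul, Complex.norm_conj]
  calc (Xᴴ * Y).trace.re
      ≤ ∑ x : n × m, ‖X x.2 x.1‖ * ‖Y x.2 x.1‖ := by
        rw [h1]; exact Finset.sum_le_sum fun x _ => h2 x
    _ ≤ Real.sqrt (∑ x : n × m, ‖X x.2 x.1‖ ^ 2)
        * Real.sqrt (∑ x : n × m, ‖Y x.2 x.1‖ ^ 2) :=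
        Real.sum_mul_le_sqrt_mul_sqrt _ _ _
    _ = Real.sqrt ((Xᴴ * X).trace.re) * Real.sqrt ((Yᴴ * Y).trace.re) := by
        rw [trace_conjTranspose_mul_re, trace_conjTranspose_mul_re]

lemma psd_trace_re_nonneg {A : Matrix n n ℂ} (hA : A.PosSemidef) : 0 ≤ A.trace.re := by
  rw [Matrix.trace, Complex.re_sum]
  refine Finset.sum_nonneg fun i _ => ?_
  have h := hA.dotProduct_mulVec_nonneg (Pi.single i 1)
  have hii : (Pi.single i 1 : n → ℂ) ⬝ᵥ (A *ᵥ Pi.single i 1) = A i i := by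
    simp [dotProduct, Matrix.mulVec, Pi.single_apply]
  rw [show star (Pi.single i 1 : n → ℂ) = Pi.single i 1 by
    ext j; simp [Pi.single_apply]] at h

  rw [hii] at h
  exact (Complex.le_def.mp h).1


lemma key {S C B : Matrix n n ℂ} (hS : S.PosSemidef) (hB : B.PosSemidef)
    (hsq : S * S = Cᴴ * B * C) :
    S.trace.re ≤ Real.sqrt ((Cᴴ * C).trace.re) * Real.sqrt (B.trace.re) := by
  classical
  set U : Matrix n n ℂ := (hS.1.eigenvectorUnitary : Matrix n n ℂ) with hUdef
  have hU1 : U * star U = 1 := Matrix.mem_unitaryGroup_iff.mp hS.1.eigenvectorUnitary.2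
  have hU2 : star U * U = 1 := Matrix.mem_unitaryGroup_iff'.mp hS.1.eigenvectorUnitary.2
  have hU1' : ∀ X : Matrix n n ℂ, U * (star U * X) = X := fun X => by
    rw [← Matrix.mul_assoc, hU1, Matrix.one_mul]
  have hU2' : ∀ X : Matrix n n ℂ, star U * (U * X) = X := fun X => by
    rw [← Matrix.mul_assoc, hU2, Matrix.one_mul]
  set s : n → ℝ := hS.1.eigenvalues with hsdef
  set D : Matrix n n ℂ := diagonal (fun i => ((s i : ℝ) : ℂ)) with hDdef
  have hDU : star U * S * U = D := by
    have h0 := hS.1.conjStarAlgAut_star_eigenvectorUnitary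
    rw [Unitary.conjStarAlgAut_apply] at h0
    simp only [Unitary.coe_star, star_star] at h0
    exact h0
  have hspec : S = U * D * star U := by
    rw [← hDU]
    simp only [Matrix.mul_assoc, hU1', hU2']
    rw [hU1, Matrix.mul_one]
  set M : Matrix n n ℂ := hB.sqrt * C * U with hMdef
  have hsqrtH : hB.sqrtᴴ = hB.sqrt := hB.posSemidef_sqrt.1
  have hMM : Mᴴ * M = D * D := by
    have hstep : hB.sqrt * (hB.sqrt * (C * U)) = B * (C * U) := by
      rw [← Matrix.mul_assoc, hB.sqrt_mul_self]
    have h1 : Mᴴ * M = star U * (Cᴴ * (B * (C * U))) := by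
      rw [hMdef, Matrix.conjTranspose_mul, Matrix.conjTranspose_mul, hsqrtH,
        Matrix.star_eq_conjTranspose]
      simp only [Matrix.mul_assoc, hstep]
    have h2 : Cᴴ * (B * (C * U)) = S * (S * U) := by
      rw [← Matrix.mul_assoc, ← Matrix.mul_assoc, ← hsq, Matrix.mul_assoc]
    rw [h1, h2]
    have h3 : star U * (S * (S * U)) = (star U * S * U) * (star U * S * U) := by
      simp only [Matrix.mul_assoc, hU1']
    rw [h3, hDU]
  set sinv : n → ℂ := fun i => if s i = 0 then 0 else ((s i : ℝ) : ℂ)⁻¹ with hsinvdef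
  set Dinv : Matrix n n ℂ := diagonal sinv with hDinvdef
  set N : Matrix n n ℂ := M * Dinv with hNdef
  have hDinvH : Dinvᴴ = Dinv := by
    rw [hDinvdef, Matrix.diagonal_conjTranspose]
    refine congrArg Matrix.diagonal (funext fun i => ?_)
    simp only [Pi.star_apply, hsinvdef]
    split_ifs with hi
    · exact star_zero _
    · rw [star_inv₀, RCLike.star_def, Complex.conj_ofReal]
  have hdiag1 : Dinv * (D * D * Dinv) = diagonal (fun i => if s i = 0 then (0:ℂ) else 1) := by
    rw [hDdef, hDinvdef, Matrix.diagonal_mul_diagonal, Matrix.diagonal_mul_diagonal,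
      Matrix.diagonal_mul_diagonal]
    refine congrArg Matrix.diagonal (funext fun i => ?_)
    simp only [Pi.mul_apply, hsinvdef]
    by_cases hi : s i = 0
    · simp [hi]
    · have h0 : ((s i : ℝ) : ℂ) ≠ 0 := Complex.ofReal_ne_zero.mpr hi
      simp only [hi, if_false]
      field_simp
  have hdiag2 : Dinv * (D * D) = diagonal (fun i => if s i = 0 then (0:ℂ) else ((s i : ℝ):ℂ)) := by
    rw [hDdef, hDinvdef, Matrix.diagonal_mul_diagonal, Matrix.diagonal_mul_diagonal]
    refine congrArg Matrix.diagonal (funext fun i => ?_)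
    simp only [Pi.mul_apply, hsinvdef]
    by_cases hi : s i = 0
    · simp [hi]
    · have h0 : ((s i : ℝ) : ℂ) ≠ 0 := Complex.ofReal_ne_zero.mpr hi
      simp only [hi, if_false]
      field_simp
  have hNN : Nᴴ * N = diagonal (fun i => if s i = 0 then (0 : ℂ) else 1) := by
    rw [hNdef, Matrix.conjTranspose_mul, Matrix.mul_assoc, ← Matrix.mul_assoc Mᴴ M Dinv,
      hMM, hDinvH]
    exact hdiag1
  have hNE : N * diagonal (fun i => if s i = 0 then (0 : ℂ) else 1) = N := by
    rw [hNdef, Matrix.mul_assoc]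
    congr 1
    rw [hDinvdef, Matrix.diagonal_mul_diagonal]
    refine congrArg Matrix.diagonal (funext fun i => ?_)
    simp only [Pi.mul_apply, hsinvdef]
    by_cases hi : s i = 0 <;> simp [hi]
  set P : Matrix n n ℂ := N * Nᴴ with hPdef
  have hPH : Pᴴ = P := by
    rw [hPdef, Matrix.conjTranspose_mul, Matrix.conjTranspose_conjTranspose]
  have hP2 : P * P = P := by
    rw [hPdef, Matrix.mul_assoc, ← Matrix.mul_assoc Nᴴ N Nᴴ, hNN, ← Matrix.mul_assoc, hNE]
  have h1P : (1 - P).PosSemidef := by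
    have hh : (1 - P)ᴴ * (1 - P) = 1 - P := by
      rw [Matrix.conjTranspose_sub, Matrix.conjTranspose_one, hPH, Matrix.sub_mul,
        Matrix.one_mul, Matrix.mul_sub, Matrix.mul_one, hP2, sub_self, sub_zero]
    rw [← hh]
    exact Matrix.posSemidef_conjTranspose_mul_self _
  have htrS : S.trace = (Nᴴ * M).trace := by
    have h2 : Nᴴ * M = Dinv * (D * D) := by
      rw [hNdef, Matrix.conjTranspose_mul, hDinvH, Matrix.mul_assoc, hMM]
    have h3 : S.trace = D.trace := by
      rw [hspec, Matrix.trace_mul_cycle, hU2, Matrix.one_mul]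
    rw [h3, h2, hdiag2, hDdef, Matrix.trace_diagonal, Matrix.trace_diagonal]
    exact (Finset.sum_congr rfl fun i _ => by by_cases hi : s i = 0 <;> simp [hi]).symm
  have hXY : (hB.sqrt * N)ᴴ * (C * U) = Nᴴ * M := by
    rw [Matrix.conjTranspose_mul, hsqrtH, Matrix.mul_assoc, ← Matrix.mul_assoc hB.sqrt C U,
      ← hMdef]
  have hcs := trace_cs (hB.sqrt * N) (C * U)
  rw [hXY, ← htrS] at hcs
  have hX : ((hB.sqrt * N)ᴴ * (hB.sqrt * N)).trace = (B * P).trace := by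
    rw [Matrix.conjTranspose_mul, hsqrtH, Matrix.mul_assoc,
      ← Matrix.mul_assoc hB.sqrt hB.sqrt N, hB.sqrt_mul_self, ← Matrix.mul_assoc,
      Matrix.trace_mul_cycle, ← hPdef]
    exact Matrix.trace_mul_comm P B
  have hU1c : U * Uᴴ = 1 := by rw [← Matrix.star_eq_conjTranspose]; exact hU1
  have hY : ((C * U)ᴴ * (C * U)).trace = (Cᴴ * C).trace := by
    rw [Matrix.conjTranspose_mul, Matrix.trace_mul_comm]
    have : (C * U) * (Uᴴ * Cᴴ) = C * Cᴴ := by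
      rw [Matrix.mul_assoc, ← Matrix.mul_assoc U Uᴴ Cᴴ, hU1c, Matrix.one_mul]
    rw [this, Matrix.trace_mul_comm]
  rw [hX, hY] at hcs
  have hsub : (hB.sqrt * (1 - P) * hB.sqrt).trace = B.trace - (B * P).trace := by
    have e1 : hB.sqrt * (1 - P) * hB.sqrt
        = hB.sqrt * hB.sqrt - hB.sqrt * P * hB.sqrt := by
      rw [Matrix.mul_sub, Matrix.mul_one, Matrix.sub_mul]
    rw [e1, Matrix.trace_sub, hB.sqrt_mul_self]
    refine congrArg (B.trace - ·) ?_
    rw [Matrix.trace_mul_cycle, hB.sqrt_mul_self]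
  have hpsd : (hB.sqrt * (1 - P) * hB.sqrtᴴ).PosSemidef := h1P.mul_mul_conjTranspose_same _
  rw [hsqrtH] at hpsd
  have hge := psd_trace_re_nonneg hpsd
  rw [hsub, Complex.sub_re] at hge
  have hBP : (B * P).trace.re ≤ B.trace.re := by linarith
  have hfin : Real.sqrt ((B * P).trace.re) ≤ Real.sqrt (B.trace.re) :=
    Real.sqrt_le_sqrt hBP
  calc S.trace.re ≤ Real.sqrt ((B * P).trace.re) * Real.sqrt ((Cᴴ * C).trace.re) := hcs
    _ ≤ Real.sqrt (B.trace.re) * Real.sqrt ((Cᴴ * C).trace.re) :=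
        mul_le_mul_of_nonneg_right hfin (Real.sqrt_nonneg _)
    _ = Real.sqrt ((Cᴴ * C).trace.re) * Real.sqrt (B.trace.re) := mul_comm _ _


end Analytic

end SuperFid

open SuperFid


theorem fidelity_le_superfidelity {d : ℕ}
    (ρ σ : Matrix (Fin d) (Fin d) ℂ)
    (hρ : ρ.PosSemidef) (hσ : σ.PosSemidef)
    (hρtr : ρ.trace = 1) (hσtr : σ.trace = 1)
    (h : (hρ.sqrt * σ * hρ.sqrt).PosSemidef) :
    (h.sqrt.trace.re) ^ 2
      ≤ (ρ * σ).trace.re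
        + Real.sqrt ((1 - (ρ * ρ).trace.re) * (1 - (σ * σ).trace.re)) := by
  set T : Matrix (Fin d) (Fin d) ℂ := h.sqrt with hTdef
  have hT : T.PosSemidef := h.posSemidef_sqrt
  have hTT : T * T = hρ.sqrt * σ * hρ.sqrt := h.sqrt_mul_self
  have hsρH : hρ.sqrtᴴ = hρ.sqrt := hρ.posSemidef_sqrt.1
  -- trace of T² is tr(ρσ)
  have htrTT : (T * T).trace = (ρ * σ).trace := by
    rw [hTT, Matrix.trace_mul_cycle, hρ.sqrt_mul_self]
  -- the key inequality applied to compounds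
  have hsq : c2 T * c2 T = (c2 hρ.sqrt)ᴴ * c2 σ * c2 hρ.sqrt := by
    rw [← c2_mul, hTT, ← c2_conjTranspose, hsρH, ← c2_mul, ← c2_mul]
  have hkey := key (c2_posSemidef hT) (c2_posSemidef hσ) hsq
  have hCC : (c2 hρ.sqrt)ᴴ * c2 hρ.sqrt = c2 ρ := by
    rw [← c2_conjTranspose, hsρH, ← c2_mul, hρ.sqrt_mul_self]
  rw [hCC] at hkey
  -- compute the real traces of c2 ρ and c2 σ
  set a : ℝ := 1 - (ρ * ρ).trace.re with hadef
  set b : ℝ := 1 - (σ * σ).trace.re with hbdef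
  have hra : (c2 ρ).trace.re = a / 2 := by
    have := congrArg Complex.re (c2_trace ρ)
    rw [hρtr] at this
    simp only [one_pow, Complex.sub_re, Complex.one_re, Complex.mul_re] at this
    norm_num at this
    rw [hadef]
    linarith
  have hrb : (c2 σ).trace.re = b / 2 := by
    have := congrArg Complex.re (c2_trace σ)
    rw [hσtr] at this
    simp only [one_pow, Complex.sub_re, Complex.one_re, Complex.mul_re] at this
    norm_num at this
    rw [hbdef]
    linarith
  have ha : 0 ≤ a := by
    have := psd_trace_re_nonneg (c2_posSemidef hρ)
    rw [hra] at this; linarith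
  have hb : 0 ≤ b := by
    have := psd_trace_re_nonneg (c2_posSemidef hσ)
    rw [hrb] at this; linarith
  rw [hra, hrb] at hkey
  have hsqrt : Real.sqrt (a / 2) * Real.sqrt (b / 2) = Real.sqrt (a * b) / 2 := by
    rw [← Real.sqrt_mul (by linarith : (0:ℝ) ≤ a / 2),
      show a / 2 * (b / 2) = a * b * (1/2)^2 by ring,
      Real.sqrt_mul (mul_nonneg ha hb), Real.sqrt_sq (by norm_num : (0:ℝ) ≤ (1:ℝ)/2)]
    ring
  rw [hsqrt] at hkey
  -- trace of T is real
  have hTim : T.trace.im = 0 := by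
    have h1 : Tᴴ.trace = star T.trace := Matrix.trace_conjTranspose T
    rw [hT.1] at h1
    have := congrArg Complex.im h1
    simp only [Complex.star_def, Complex.conj_im] at this
    linarith
  -- the expansion identity
  have hexp : (T.trace.re) ^ 2 = (ρ * σ).trace.re + 2 * (c2 T).trace.re := by
    have hid : T.trace ^ 2 = (ρ * σ).trace + 2 * (c2 T).trace := by
      have := c2_trace T
      rw [htrTT] at this
      linear_combination this
    have := congrArg Complex.re hid
    simp only [Complex.add_re, Complex.mul_re, pow_two, Complex.re_ofNat, Complex.im_ofNat,
      hTim] at this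
    rw [pow_two]
    linarith
  rw [hexp]
  have : 2 * (c2 T).trace.re ≤ Real.sqrt (a * b) := by
    have := hkey
    linarith
  linarith
end

section
/- The polynomial p(d, Δ) = Σ_{0≤n<m≤d−1} [L_n^{(0)}(Δ²) L_m^{(0)}(Δ²) − (n!/m!) Δ^{2(m−n)} (L_n^{(m−n)}(Δ²))²] is an even polynomial in Δ with constant term d(d−1)/2 and coefficient of Δ² equal to −d²(d−1)/2. -/
open Polynomial Finset

/-- The associated Laguerre polynomial `L_n^{(α)}` as a real polynomial. -/
noncomputable def laguerrePoly (n α : ℕ) : Polynomial ℝ :=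
  ∑ k ∈ Finset.range (n + 1),
    Polynomial.C (((n + α).choose (n - k) : ℝ) * (-1) ^ k / k.factorial) * Polynomial.X ^ k

/-- The polynomial `p(d, Δ)` (as a polynomial in `Δ`). -/
noncomputable def shortTimePoly (d : ℕ) : Polynomial ℝ :=
  ∑ n ∈ Finset.range d, ∑ m ∈ Finset.Ico (n + 1) d,
    ((laguerrePoly n 0).comp (Polynomial.X ^ 2) * (laguerrePoly m 0).comp (Polynomial.X ^ 2)
      - Polynomial.C ((n.factorial : ℝ) / m.factorial) * Polynomial.X ^ (2 * (m - n)) *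
          ((laguerrePoly n (m - n)).comp (Polynomial.X ^ 2)) ^ 2)

lemma lag_coeff (n α k : ℕ) : (laguerrePoly n α).coeff k =
    if k ≤ n then ((n + α).choose (n - k) : ℝ) * (-1) ^ k / k.factorial else 0 := by
  rw [laguerrePoly, finset_sum_coeff]
  simp only [coeff_C_mul, coeff_X_pow, mul_ite, mul_one, mul_zero]
  rw [Finset.sum_ite_eq (Finset.range (n+1))]
  simp [Nat.lt_succ_iff]

lemma lag_coeff_zero (n α : ℕ) : (laguerrePoly n α).coeff 0 = ((n + α).choose α : ℝ) := by
  rw [lag_coeff, if_pos (Nat.zero_le n)]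
  rw [Nat.sub_zero, show (n + α).choose n = (n + α).choose (n + α - α) by rw [Nat.add_sub_cancel],
    Nat.choose_symm (Nat.le_add_left α n)]
  simp

lemma lag0_coeff_zero (n : ℕ) : (laguerrePoly n 0).coeff 0 = 1 := by
  rw [lag_coeff_zero]; simp

lemma lag0_coeff_one (n : ℕ) : (laguerrePoly n 0).coeff 1 = -(n : ℝ) := by
  rw [lag_coeff]
  rcases Nat.eq_zero_or_pos n with h | h
  · simp [h]
  · rw [if_pos (show 1 ≤ n from h), Nat.add_zero, Nat.choose_symm h, Nat.choose_one_right]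
    simp

noncomputable def Qterm (n m : ℕ) : Polynomial ℝ :=
  laguerrePoly n 0 * laguerrePoly m 0
    - Polynomial.C ((n.factorial : ℝ) / m.factorial) * Polynomial.X ^ (m - n)
        * (laguerrePoly n (m - n)) ^ 2

lemma shortTimePoly_eq_expand (d : ℕ) :
    shortTimePoly d = Polynomial.expand ℝ 2
      (∑ n ∈ Finset.range d, ∑ m ∈ Finset.Ico (n + 1) d, Qterm n m) := by
  rw [map_sum]
  refine Finset.sum_congr rfl fun n _ => ?_
  rw [map_sum]
  refine Finset.sum_congr rfl fun m _ => ?_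
  rw [Qterm, map_sub, map_mul, map_mul, map_mul, map_pow, map_pow]
  simp only [expand_C, expand_X, expand_eq_comp_X_pow, C_comp, X_comp, ← pow_mul]


lemma coeff_one_mul' (p q : Polynomial ℝ) :
    (p * q).coeff 1 = p.coeff 0 * q.coeff 1 + p.coeff 1 * q.coeff 0 := by
  rw [coeff_mul, Finset.Nat.sum_antidiagonal_eq_sum_range_succ_mk]
  simp [Finset.sum_range_succ]

lemma Qterm_coeff_zero {n m : ℕ} (h : n < m) : (Qterm n m).coeff 0 = 1 := by
  rw [Qterm, coeff_sub, mul_coeff_zero, mul_coeff_zero, lag0_coeff_zero, lag0_coeff_zero,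
    coeff_C_mul, coeff_X_pow, if_neg (by omega : ¬ (0 = m - n))]
  ring

lemma Qterm_coeff_one {n m : ℕ} (h : n < m) :
    (Qterm n m).coeff 1 = -(n : ℝ) - m - (if m = n + 1 then (n : ℝ) + 1 else 0) := by
  rw [Qterm, coeff_sub, coeff_one_mul', coeff_one_mul', lag0_coeff_zero, lag0_coeff_zero,
    lag0_coeff_one, lag0_coeff_one, coeff_C_mul, coeff_C_mul, coeff_X_pow, coeff_X_pow,
    if_neg (by omega : ¬ (0 = m - n)), sq, mul_coeff_zero, lag_coeff_zero]
  by_cases hm : m = n + 1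
  · subst hm
    rw [if_pos rfl, if_pos (by omega : 1 = n + 1 - n)]
    have h1 : n + (n + 1 - n) = n + 1 := by omega
    have h2 : n + 1 - n = 1 := by omega
    rw [h1, h2, Nat.choose_one_right, Nat.factorial_succ]
    have hf : (n.factorial : ℝ) ≠ 0 := Nat.cast_ne_zero.mpr n.factorial_ne_zero
    field_simp
    push_cast; ring
  · rw [if_neg hm, if_neg (by omega : ¬ (1 = m - n))]
    ring

lemma sumR (d : ℕ) : (∑ n ∈ Finset.range d, (n : ℝ)) = d * (d - 1) / 2 := by
  induction d with
  | zero => simp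
  | succ d ih => rw [Finset.sum_range_succ, ih]; push_cast; ring

lemma sum_one_pairs (d : ℕ) :
    (∑ n ∈ Finset.range d, ∑ m ∈ Finset.Ico (n + 1) d, (1 : ℝ)) = d * (d - 1) / 2 := by
  induction d with
  | zero => simp
  | succ d ih =>
    rw [Finset.sum_range_succ, Finset.Ico_self, Finset.sum_empty, add_zero,
      Finset.sum_congr rfl (fun n hn =>
        Finset.sum_Ico_succ_top (Nat.succ_le_of_lt (mem_range.mp hn)) _),
      Finset.sum_add_distrib, ih]
    simp only [Finset.sum_const, Finset.card_range, nsmul_eq_mul, mul_one]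
    push_cast; ring

lemma sum_g_pairs (d : ℕ) :
    (∑ n ∈ Finset.range d, ∑ m ∈ Finset.Ico (n + 1) d,
      (-(n : ℝ) - m - (if m = n + 1 then (n : ℝ) + 1 else 0)))
      = -((d : ℝ) ^ 2 * (d - 1) / 2) := by
  induction d with
  | zero => simp
  | succ d ih =>
    rw [Finset.sum_range_succ, Finset.Ico_self, Finset.sum_empty, add_zero,
      Finset.sum_congr rfl (fun n hn =>
        Finset.sum_Ico_succ_top (Nat.succ_le_of_lt (mem_range.mp hn)) _),
      Finset.sum_add_distrib, ih]
    have hite : (∑ n ∈ Finset.range d, (if d = n + 1 then (n : ℝ) + 1 else 0))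
        = if 1 ≤ d then (d : ℝ) else 0 := by
      rcases d with _ | e
      · simp
      · rw [if_pos (by omega)]
        have : ∀ n ∈ Finset.range (e + 1),
            (if e + 1 = n + 1 then (n : ℝ) + 1 else 0) = (if e = n then (n : ℝ) + 1 else 0) := by
          intro n _; simp
        rw [Finset.sum_congr rfl this, Finset.sum_ite_eq (Finset.range (e + 1))]
        rw [if_pos (mem_range.mpr (by omega))]
        push_cast; ring
    have hsplit : (∑ n ∈ Finset.range d,
        (-(n : ℝ) - d - (if d = n + 1 then (n : ℝ) + 1 else 0)))
        = -(∑ n ∈ Finset.range d, (n : ℝ)) - d * d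
          - (∑ n ∈ Finset.range d, (if d = n + 1 then (n : ℝ) + 1 else 0)) := by
      rw [Finset.sum_sub_distrib, Finset.sum_sub_distrib, Finset.sum_neg_distrib,
        Finset.sum_const, Finset.card_range, nsmul_eq_mul]
    rw [hsplit, hite, sumR]
    rcases Nat.eq_zero_or_pos d with h | h
    · subst h; simp
    · rw [if_pos (show 1 ≤ d from h)]; push_cast; ring

theorem shortTimePoly_even_and_low_coeffs (d : ℕ) (hd : 2 ≤ d) :
    (∀ k : ℕ, Odd k → (shortTimePoly d).coeff k = 0) ∧
    (shortTimePoly d).coeff 0 = (d : ℝ) * (d - 1) / 2 ∧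
    (shortTimePoly d).coeff 2 = -((d : ℝ) ^ 2 * (d - 1) / 2) := by
  rw [shortTimePoly_eq_expand]
  refine ⟨fun k hk => ?_, ?_, ?_⟩
  · obtain ⟨j, rfl⟩ := hk
    rw [coeff_expand (by norm_num), if_neg (by omega : ¬ (2 ∣ 2 * j + 1))]
  · rw [coeff_expand (by norm_num), if_pos (by norm_num : (2:ℕ) ∣ 0), (by norm_num : (0:ℕ)/2 = 0)]
    simp only [finset_sum_coeff]
    have h1 : ∀ n ∈ Finset.range d, ∑ m ∈ Finset.Ico (n + 1) d, (Qterm n m).coeff 0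
        = ∑ m ∈ Finset.Ico (n + 1) d, (1 : ℝ) :=
      fun n _ => Finset.sum_congr rfl fun m hm => Qterm_coeff_zero (Finset.mem_Ico.mp hm).1
    rw [Finset.sum_congr rfl h1]
    exact sum_one_pairs d
  · rw [coeff_expand (by norm_num), if_pos (by norm_num : (2:ℕ) ∣ 2), (by norm_num : (2:ℕ)/2 = 1)]
    simp only [finset_sum_coeff]
    have h1 : ∀ n ∈ Finset.range d, ∑ m ∈ Finset.Ico (n + 1) d, (Qterm n m).coeff 1
        = ∑ m ∈ Finset.Ico (n + 1) d, (-(n : ℝ) - m - (if m = n + 1 then (n : ℝ) + 1 else 0)) :=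
      fun n _ => Finset.sum_congr rfl fun m hm => Qterm_coeff_one (Finset.mem_Ico.mp hm).1
    rw [Finset.sum_congr rfl h1]
    exact sum_g_pairs d
end
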